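/- Let $A,B,C,D$ be nonnegative $m\times m$ diagonal matrices with diagonal vectors $d^A,d^B,d^C,d^D\in\mathbb{R}^m_+$, and let $m\le n$. Then $\sup_{R\in\mathcal{O}^m,\,P\in\mathcal{O}^n} \mathrm{tr}(R[A\;0]P[B;0]) + \mathrm{tr}(R[C\;0]P[D;0]) = \max_{E\in\mathcal{P}_m} (d^A)^\top E\, d^B + (d^C)^\top E\, d^D$, where $[A\;0]\in\mathbb{R}^{m\times n}$ denotes padding with zero columns, $[B;0]\in\mathbb{R}^{n\times m}$ denotes padding with zero rows, $\mathcal{O}^k$ is the set of $k\times k$ orthogonal matrices, and $\mathcal{P}_m$ is the set of $m\times m$ permutation matrices. -/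

import Mathlib

open Matrix Finset

def mdot {m n : ℕ} (A B : Matrix (Fin m) (Fin n) ℝ) : ℝ := ∑ i, ∑ j, A i j * B i j

noncomputable def frob {m n : ℕ} (A : Matrix (Fin m) (Fin n) ℝ) : ℝ := Real.sqrt (mdot A A)

def IsOrth {k : ℕ} (R : Matrix (Fin k) (Fin k) ℝ) : Prop := Rᵀ * R = 1

def rdg (a b : ℕ) {c : ℕ} (x : Fin c → ℝ) : Matrix (Fin a) (Fin b) ℝ :=
  Matrix.of fun i j => if h : (i : ℕ) = (j : ℕ) ∧ (i : ℕ) < c then x ⟨i, h.2⟩ else 0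

noncomputable def descSort {k : ℕ} (f : Fin k → ℝ) : Fin k → ℝ := fun i => f (Tuple.sort f i.rev)

noncomputable def sigCol {a r : ℕ} (X : Matrix (Fin a) (Fin r) ℝ) : Fin r → ℝ :=
  descSort fun i => Real.sqrt ((show (Xᵀ * X).IsHermitian by simpa using Matrix.isHermitian_conjTranspose_mul_self X).eigenvalues i)

noncomputable def sigRow {a b : ℕ} (X : Matrix (Fin a) (Fin b) ℝ) : Fin a → ℝ :=
  descSort fun i => Real.sqrt ((Matrix.isHermitian_mul_conjTranspose_self X).eigenvalues i)

noncomputable def toDual {m n : ℕ} (G : Matrix (Fin m) (Fin n) ℝ) :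
    Matrix (Fin m) (Fin n) ℝ →L[ℝ] ℝ :=
  LinearMap.toContinuousLinearMap
    { toFun := fun Y => mdot G Y
      map_add' := fun Y Z => by
        simp [mdot, Matrix.add_apply, mul_add, Finset.sum_add_distrib]
      map_smul' := fun c Y => by
        simp [mdot, Matrix.smul_apply, smul_eq_mul, Finset.mul_sum, mul_left_comm] }

noncomputable def enorm2 {k : ℕ} (v : Fin k → ℝ) : ℝ := Real.sqrt (∑ i, v i ^ 2)

def subdiff {m n : ℕ} (f : Matrix (Fin m) (Fin n) ℝ → ℝ) (X : Matrix (Fin m) (Fin n) ℝ) :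
    Set (Matrix (Fin m) (Fin n) ℝ) := {G | ∀ Y, f X + mdot G (Y - X) ≤ f Y}


section Aux

lemma permMatrix_apply' {k : ℕ} (e : Equiv.Perm (Fin k)) (i j : Fin k) :
    e.permMatrix ℝ i j = if e i = j then 1 else 0 := by
  simp [Equiv.Perm.permMatrix, PEquiv.toMatrix_apply, Equiv.toPEquiv_apply, eq_comm]

lemma isOrth_perm {k : ℕ} (e : Equiv.Perm (Fin k)) : IsOrth (e.permMatrix ℝ) := by
  unfold IsOrth
  rw [Equiv.Perm.permMatrix, ← PEquiv.toMatrix_symm, ← Equiv.toPEquiv_symm,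
    ← PEquiv.toMatrix_trans, ← Equiv.toPEquiv_trans]
  simp

lemma rdg_apply' {m n : ℕ} (hmn : m ≤ n) (x : Fin m → ℝ) (k : Fin m) (l : Fin n) :
    rdg m n x k l = if l = Fin.castLE hmn k then x k else 0 := by
  simp only [rdg, Matrix.of_apply]
  by_cases h : l = Fin.castLE hmn k
  · subst h
    rw [dif_pos ⟨rfl, k.isLt⟩, if_pos rfl]
  · rw [dif_neg, if_neg h]
    rintro ⟨h1, -⟩
    exact h (by ext; exact h1.symm)

lemma trace_form {m n : ℕ} (hmn : m ≤ n) (x y : Fin m → ℝ) (R : Matrix (Fin m) (Fin m) ℝ)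
    (P : Matrix (Fin n) (Fin n) ℝ) :
    Matrix.trace (R * rdg m n x * P * (rdg m n y)ᵀ) =
      ∑ i, ∑ k, (x k * y i) * (R i k * P (Fin.castLE hmn k) (Fin.castLE hmn i)) := by
  simp only [Matrix.trace, Matrix.diag, Matrix.mul_apply, Matrix.transpose_apply,
    rdg_apply' hmn, ite_mul, mul_ite, mul_zero, zero_mul, Finset.sum_ite_eq,
    Finset.sum_ite_eq', Finset.mem_univ, if_true, Finset.sum_mul, Finset.mul_sum]
  apply Finset.sum_congr rfl; intro i _
  rw [Finset.sum_comm]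
  simp only [Finset.sum_ite_eq', Finset.mem_univ, if_true]
  apply Finset.sum_congr rfl; intro k _
  ring

lemma mem_trace {m n : ℕ} (hmn : m ≤ n) (x y : Fin m → ℝ) (τ : Equiv.Perm (Fin m)) :
    Matrix.trace ((τ⁻¹).permMatrix ℝ * rdg m n x *
        ((τ.viaEmbedding (Fin.castLEEmb hmn)).permMatrix ℝ) * (rdg m n y)ᵀ)
      = ∑ k, x k * y (τ k) := by
  have hπ : ∀ j : Fin m,
      (τ.viaEmbedding (Fin.castLEEmb hmn)) (Fin.castLE hmn j) = Fin.castLE hmn (τ j) :=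
    fun j => τ.viaEmbedding_apply (Fin.castLEEmb hmn) j
  rw [trace_form hmn, Finset.sum_comm]
  apply Finset.sum_congr rfl; intro k _
  rw [Fintype.sum_eq_single (τ k)]
  · simp [permMatrix_apply', Equiv.toPEquiv_apply, hπ]
  · intro i hi
    have h2 : τ k ≠ i := fun h => hi h.symm
    simp [permMatrix_apply', Equiv.toPEquiv_apply, hπ, Fin.castLE_inj, h2]

lemma dominating_DS {m : ℕ} (S : Matrix (Fin m) (Fin m) ℝ) (h0 : ∀ k i, 0 ≤ S k i)
    (hr : ∀ k, ∑ i, S k i ≤ 1) (hc : ∀ i, ∑ k, S k i ≤ 1) :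
    ∃ D ∈ doublyStochastic ℝ (Fin m), ∀ k i, S k i ≤ D k i := by
  set r : Fin m → ℝ := fun k => 1 - ∑ i, S k i with hrdef
  set c : Fin m → ℝ := fun i => 1 - ∑ k, S k i with hcdef
  have hr0 : ∀ k, 0 ≤ r k := fun k => by simp [hrdef, hr k]
  have hc0 : ∀ i, 0 ≤ c i := fun i => by simp [hcdef, hc i]
  set s : ℝ := ∑ k, r k with hsdef
  have hs0 : 0 ≤ s := Finset.sum_nonneg fun k _ => hr0 k
  have hsc : s = ∑ i, c i := by
    simp only [hsdef, hrdef, hcdef, Finset.sum_sub_distrib]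
    rw [Finset.sum_comm]
  rcases eq_or_lt_of_le hs0 with hs | hs
  · have hrz : ∀ k, r k = 0 := by
      intro k
      have := (Finset.sum_eq_zero_iff_of_nonneg (fun k _ => hr0 k)).mp hs.symm
      exact this k (Finset.mem_univ k)
    have hcz : ∀ i, c i = 0 := by
      intro i
      have h : ∑ i, c i = 0 := by rw [← hsc, ← hs]
      exact (Finset.sum_eq_zero_iff_of_nonneg (fun i _ => hc0 i)).mp h i (Finset.mem_univ i)
    refine ⟨S, ?_, fun k i => le_refl _⟩
    rw [mem_doublyStochastic_iff_sum]
    refine ⟨h0, fun k => ?_, fun i => ?_⟩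
    · have := hrz k; simp only [hrdef] at this; linarith
    · have := hcz i; simp only [hcdef] at this; linarith
  · refine ⟨S + Matrix.of fun k i => r k * c i / s, ?_, fun k i => ?_⟩
    · rw [mem_doublyStochastic_iff_sum]
      refine ⟨fun k i => ?_, fun k => ?_, fun i => ?_⟩
      · have h2 : 0 ≤ r k * c i / s := div_nonneg (mul_nonneg (hr0 k) (hc0 i)) hs0
        simpa [Matrix.add_apply] using add_nonneg (h0 k i) h2
      · simp only [Matrix.add_apply, Matrix.of_apply, Finset.sum_add_distrib]
        rw [← Finset.sum_div, ← Finset.mul_sum, ← hsc,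
          mul_div_assoc, div_self (ne_of_gt hs), mul_one]
        simp only [hrdef]
        ring
      · simp only [Matrix.add_apply, Matrix.of_apply, Finset.sum_add_distrib]
        rw [← Finset.sum_div, ← Finset.sum_mul, ← hsdef,
          mul_comm, mul_div_assoc, div_self (ne_of_gt hs), mul_one]
        simp only [hcdef]
        ring
    · have h2 : 0 ≤ r k * c i / s := div_nonneg (mul_nonneg (hr0 k) (hc0 i)) hs0
      simpa [Matrix.add_apply] using h2

lemma col_sq_sum {k : ℕ} {R : Matrix (Fin k) (Fin k) ℝ} (hR : IsOrth R) (j : Fin k) :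
    ∑ i, R i j ^ 2 = 1 := by
  have := congrFun (congrFun hR j) j
  simpa [Matrix.mul_apply, Matrix.one_apply, sq] using this

lemma sub_sum_sq_le {m n : ℕ} (hmn : m ≤ n) (f : Fin n → ℝ) (h1 : ∑ j, f j ^ 2 = 1) :
    ∑ i : Fin m, f (Fin.castLE hmn i) ^ 2 ≤ 1 := by
  rw [← h1]
  have : ∑ i : Fin m, f (Fin.castLE hmn i) ^ 2
      = ∑ j ∈ Finset.univ.map (Fin.castLEEmb hmn), f j ^ 2 := by
    rw [Finset.sum_map]
    rfl
  rw [this]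
  exact Finset.sum_le_sum_of_subset_of_nonneg (Finset.subset_univ _)
    (fun j _ _ => sq_nonneg _)

lemma key_upper {m n : ℕ} (hmn : m ≤ n) (w : Fin m → Fin m → ℝ) (hw : ∀ k i, 0 ≤ w k i)
    (R : Matrix (Fin m) (Fin m) ℝ) (P : Matrix (Fin n) (Fin n) ℝ)
    (hR : IsOrth R) (hP : IsOrth P) :
    ∃ σ : Equiv.Perm (Fin m),
      ∑ k, ∑ i, w k i * (R i k * P (Fin.castLE hmn k) (Fin.castLE hmn i))
        ≤ ∑ k, w k (σ k) := by
  have hP' : IsOrth Pᵀ := by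
    unfold IsOrth at hP ⊢
    rw [Matrix.transpose_transpose, mul_eq_one_comm]
    exact hP
  have hR' : IsOrth Rᵀ := by
    unfold IsOrth at hR ⊢
    rw [Matrix.transpose_transpose, mul_eq_one_comm]
    exact hR
  set S : Matrix (Fin m) (Fin m) ℝ :=
    Matrix.of fun k i => |R i k| * |P (Fin.castLE hmn k) (Fin.castLE hmn i)| with hSdef
  have hS0 : ∀ k i, 0 ≤ S k i := fun k i => mul_nonneg (abs_nonneg _) (abs_nonneg _)
  have habs : ∀ (u v : ℝ), |u| * |v| ≤ (u ^ 2 + v ^ 2) / 2 := by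
    intro u v
    nlinarith [sq_nonneg (|u| - |v|), sq_abs u, sq_abs v, abs_nonneg u, abs_nonneg v]
  have hSr : ∀ k, ∑ i, S k i ≤ 1 := by
    intro k
    have h1 : ∑ i, R i k ^ 2 = 1 := col_sq_sum hR k
    have h2 : ∑ i : Fin m, P (Fin.castLE hmn k) (Fin.castLE hmn i) ^ 2 ≤ 1 := by
      apply sub_sum_sq_le hmn
      have := col_sq_sum hP' (Fin.castLE hmn k)
      simpa [Matrix.transpose_apply] using this
    calc ∑ i, S k i ≤ ∑ i, (R i k ^ 2 + P (Fin.castLE hmn k) (Fin.castLE hmn i) ^ 2) / 2 :=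
          Finset.sum_le_sum fun i _ => habs _ _
      _ = ((∑ i, R i k ^ 2) + ∑ i, P (Fin.castLE hmn k) (Fin.castLE hmn i) ^ 2) / 2 := by
          rw [← Finset.sum_add_distrib, Finset.sum_div]
      _ ≤ (1 + 1) / 2 := by rw [h1]; linarith
      _ = 1 := by norm_num
  have hSc : ∀ i, ∑ k, S k i ≤ 1 := by
    intro i
    have h1 : ∑ k, R i k ^ 2 = 1 := by
      have := col_sq_sum hR' i
      simpa [Matrix.transpose_apply] using this
    have h2 : ∑ k : Fin m, P (Fin.castLE hmn k) (Fin.castLE hmn i) ^ 2 ≤ 1 := by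
      apply sub_sum_sq_le hmn (fun u => P u (Fin.castLE hmn i))
      exact col_sq_sum hP (Fin.castLE hmn i)
    calc ∑ k, S k i ≤ ∑ k, (R i k ^ 2 + P (Fin.castLE hmn k) (Fin.castLE hmn i) ^ 2) / 2 :=
          Finset.sum_le_sum fun k _ => habs _ _
      _ = ((∑ k, R i k ^ 2) + ∑ k, P (Fin.castLE hmn k) (Fin.castLE hmn i) ^ 2) / 2 := by
          rw [← Finset.sum_add_distrib, Finset.sum_div]
      _ ≤ (1 + 1) / 2 := by rw [h1]; linarith
      _ = 1 := by norm_num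
  obtain ⟨D, hD, hSD⟩ := dominating_DS S hS0 hSr hSc
  obtain ⟨wt, hwt0, hwt1, hwsum⟩ := exists_eq_sum_perm_of_mem_doublyStochastic hD
  have hstep1 : ∑ k, ∑ i, w k i * (R i k * P (Fin.castLE hmn k) (Fin.castLE hmn i))
      ≤ ∑ k, ∑ i, w k i * D k i := by
    apply Finset.sum_le_sum; intro k _
    apply Finset.sum_le_sum; intro i _
    apply mul_le_mul_of_nonneg_left _ (hw k i)
    calc R i k * P (Fin.castLE hmn k) (Fin.castLE hmn i)
        ≤ |R i k * P (Fin.castLE hmn k) (Fin.castLE hmn i)| := le_abs_self _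
      _ = S k i := by rw [abs_mul]; rfl
      _ ≤ D k i := hSD k i
  obtain ⟨σmax, -, hmax⟩ := Finset.exists_max_image (Finset.univ : Finset (Equiv.Perm (Fin m)))
    (fun σ => ∑ k, w k (σ k)) ⟨1, Finset.mem_univ 1⟩
  refine ⟨σmax, hstep1.trans ?_⟩
  have hDval : ∀ k i, D k i = ∑ σ : Equiv.Perm (Fin m), wt σ * (σ.permMatrix ℝ) k i := by
    intro k i
    have := congrFun (congrFun hwsum k) i
    simp only [Matrix.sum_apply, Matrix.smul_apply, smul_eq_mul] at this
    exact this.symm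
  have hinner : ∀ k, ∑ i, w k i * D k i = ∑ σ : Equiv.Perm (Fin m), wt σ * w k (σ k) := by
    intro k
    simp only [hDval, Finset.mul_sum]
    rw [Finset.sum_comm]
    apply Finset.sum_congr rfl; intro σ _
    simp [permMatrix_apply', Equiv.toPEquiv_apply, mul_ite, mul_one, mul_zero,
      Finset.sum_ite_eq, mul_comm]
  calc ∑ k, ∑ i, w k i * D k i
      = ∑ σ : Equiv.Perm (Fin m), wt σ * ∑ k, w k (σ k) := by
        rw [Finset.sum_congr rfl (fun k _ => hinner k), Finset.sum_comm]
        apply Finset.sum_congr rfl; intro σ _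
        rw [Finset.mul_sum]
    _ ≤ ∑ σ : Equiv.Perm (Fin m), wt σ * ∑ k, w k (σmax k) := by
        apply Finset.sum_le_sum; intro σ _
        exact mul_le_mul_of_nonneg_left (hmax σ (Finset.mem_univ σ)) (hwt0 σ)
    _ = ∑ k, w k (σmax k) := by rw [← Finset.sum_mul, hwt1, one_mul]

end Aux

theorem two_pair_von_neumann (m n : ℕ) (hmn : m ≤ n) (a b c d : Fin m → ℝ)
    (ha : ∀ i, 0 ≤ a i) (hb : ∀ i, 0 ≤ b i) (hc : ∀ i, 0 ≤ c i) (hd : ∀ i, 0 ≤ d i) :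
    sSup {t : ℝ | ∃ (R : Matrix (Fin m) (Fin m) ℝ) (P : Matrix (Fin n) (Fin n) ℝ),
        IsOrth R ∧ IsOrth P ∧
        t = Matrix.trace (R * rdg m n a * P * (rdg m n b)ᵀ)
            + Matrix.trace (R * rdg m n c * P * (rdg m n d)ᵀ)} =
      ⨆ τ : Equiv.Perm (Fin m), ((∑ i, a i * b (τ i)) + ∑ i, c i * d (τ i)) := by
  have hmem : ∀ τ : Equiv.Perm (Fin m),
      ((∑ i, a i * b (τ i)) + ∑ i, c i * d (τ i)) ∈
        {t : ℝ | ∃ (R : Matrix (Fin m) (Fin m) ℝ) (P : Matrix (Fin n) (Fin n) ℝ),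
          IsOrth R ∧ IsOrth P ∧
          t = Matrix.trace (R * rdg m n a * P * (rdg m n b)ᵀ)
              + Matrix.trace (R * rdg m n c * P * (rdg m n d)ᵀ)} := by
    intro τ
    refine ⟨(τ⁻¹).permMatrix ℝ, ((τ.viaEmbedding (Fin.castLEEmb hmn)).permMatrix ℝ),
      isOrth_perm _, isOrth_perm _, ?_⟩
    rw [mem_trace hmn a b τ, mem_trace hmn c d τ]
  have hub : ∀ t ∈ {t : ℝ | ∃ (R : Matrix (Fin m) (Fin m) ℝ) (P : Matrix (Fin n) (Fin n) ℝ),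
          IsOrth R ∧ IsOrth P ∧
          t = Matrix.trace (R * rdg m n a * P * (rdg m n b)ᵀ)
              + Matrix.trace (R * rdg m n c * P * (rdg m n d)ᵀ)},
      t ≤ ⨆ τ : Equiv.Perm (Fin m), ((∑ i, a i * b (τ i)) + ∑ i, c i * d (τ i)) := by
    rintro t ⟨R, P, hR, hP, rfl⟩
    rw [trace_form hmn a b R P, trace_form hmn c d R P]
    set w : Fin m → Fin m → ℝ := fun k i => a k * b i + c k * d i with hwdef
    obtain ⟨σ, hσ⟩ := key_upper hmn w
      (fun k i => add_nonneg (mul_nonneg (ha k) (hb i)) (mul_nonneg (hc k) (hd i)))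
      R P hR hP
    have hsum : (∑ i, ∑ k, (a k * b i) * (R i k * P (Fin.castLE hmn k) (Fin.castLE hmn i)))
          + (∑ i, ∑ k, (c k * d i) * (R i k * P (Fin.castLE hmn k) (Fin.castLE hmn i)))
        = ∑ k, ∑ i, w k i * (R i k * P (Fin.castLE hmn k) (Fin.castLE hmn i)) := by
      simp only [← Finset.sum_add_distrib]
      rw [Finset.sum_comm]
      apply Finset.sum_congr rfl; intro k _
      apply Finset.sum_congr rfl; intro i _
      simp only [hwdef]
      ring
    rw [hsum]
    refine hσ.trans ?_
    have hval : ∑ k, w k (σ k) = (∑ i, a i * b (σ i)) + ∑ i, c i * d (σ i) := by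
      simp [hwdef, Finset.sum_add_distrib]
    rw [hval]
    exact le_ciSup (f := fun τ : Equiv.Perm (Fin m) =>
      (∑ i, a i * b (τ i)) + ∑ i, c i * d (τ i))
      (Set.Finite.bddAbove (Set.finite_range _)) σ
  apply le_antisymm
  · exact csSup_le ⟨_, hmem 1⟩ hub
  · refine ciSup_le fun τ => le_csSup ?_ (hmem τ)
    exact ⟨⨆ τ : Equiv.Perm (Fin m), ((∑ i, a i * b (τ i)) + ∑ i, c i * d (τ i)),
      fun t ht => hub t ht⟩
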